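/- Suppose (a_k) is a ternary linear recurrent integer sequence with a_k = α a_{k-1} + β a_{k-2} + γ a_{k-3} for k ≥ 3. Then in the trinomial transform triangle, every row satisfies the same recurrence: a(n,k) = α a(n,k-1) + β a(n,k-2) + γ a(n,k-3) for all 0 ≤ n ≤ k-3. -/

import Mathlib

open Finset

/-- Trinomial coefficient: coefficient of x^i in (1+x+x^2)^n, zero for i<0. -/
def T (n : ℕ) (i : ℤ) : ℕ :=
  if 0 ≤ i then ∑ j ∈ Finset.range (i.toNat + 1), n.choose j * j.choose (i.toNat - j) else 0

theorem triangle_rows_same_recurrence (α β γ : ℤ) (hγ : γ ≠ 0) (a : ℕ → ℤ) (f : ℕ → ℕ → ℤ)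
    (hf0 : ∀ k, f 0 k = a k)
    (hf : ∀ n k, 1 ≤ n → n ≤ k → f n k = f (n - 1) (k - 1) + f (n - 1) k + f (n - 1) (k + 1))
    (ha : ∀ k, a (k + 3) = α * a (k + 2) + β * a (k + 1) + γ * a k)
    (n k : ℕ) (hnk : n + 3 ≤ k) :
    f n k = α * f n (k - 1) + β * f n (k - 2) + γ * f n (k - 3) := by
  induction n generalizing k with
  | zero =>
    obtain ⟨m, rfl⟩ : ∃ m, k = m + 3 := ⟨k - 3, by omega⟩
    simp only [hf0]
    have : m + 3 - 1 = m + 2 := by omega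
    rw [this]
    have : m + 3 - 2 = m + 1 := by omega
    rw [this]
    have : m + 3 - 3 = m := by omega
    rw [this]
    exact ha m
  | succ n ih =>
    have h1 : f (n + 1) k = f n (k - 1) + f n k + f n (k + 1) := by
      have := hf (n + 1) k (by omega) (by omega)
      simpa using this
    have h2 : f (n + 1) (k - 1) = f n (k - 2) + f n (k - 1) + f n k := by
      have := hf (n + 1) (k - 1) (by omega) (by omega)
      have e1 : k - 1 - 1 = k - 2 := by omega
      have e2 : k - 1 + 1 = k := by omega
      simpa [e1, e2] using this
    have h3 : f (n + 1) (k - 2) = f n (k - 3) + f n (k - 2) + f n (k - 1) := by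
      have := hf (n + 1) (k - 2) (by omega) (by omega)
      have e1 : k - 2 - 1 = k - 3 := by omega
      have e2 : k - 2 + 1 = k - 1 := by omega
      simpa [e1, e2] using this
    have h4 : f (n + 1) (k - 3) = f n (k - 4) + f n (k - 3) + f n (k - 2) := by
      have := hf (n + 1) (k - 3) (by omega) (by omega)
      have e1 : k - 3 - 1 = k - 4 := by omega
      have e2 : k - 3 + 1 = k - 2 := by omega
      simpa [e1, e2] using this
    have i1 := ih (k + 1) (by omega)
    have i2 := ih k (by omega)
    have i3 := ih (k - 1) (by omega)
    have e1 : k + 1 - 1 = k := by omega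
    have e2 : k + 1 - 2 = k - 1 := by omega
    have e3 : k + 1 - 3 = k - 2 := by omega
    have e4 : k - 1 - 1 = k - 2 := by omega
    have e5 : k - 1 - 2 = k - 3 := by omega
    have e6 : k - 1 - 3 = k - 4 := by omega
    rw [e1, e2, e3] at i1
    rw [e4, e5, e6] at i3
    rw [h1, h2, h3, h4, i1, i2, i3]
    ring
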